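/- Let γ > 0 and 0 < a < 1. The limit as y → 1⁻ of (1/γ)·( log(y/(1−y)) − 2y − log(a/(1−a)) + 2a ) − (e/γ)·∫_a^y e^{-1/z}·z/(1−z) dz exists and is finite; that is, although R(a,y) and (e/γ)·S(a,y) each diverge to +∞ as y → 1⁻, their difference T̄_a(y) = R(a,y) − S(a,y)·K(1) converges to a finite value ('the mean time to decay from full excitation to level a is finite'). -/

import Mathlib

/-- Heterodyne scale density Q(z) = e^{-1/z}·z/(1−z). -/
noncomputable def Qhet (z : ℝ) : ℝ := Real.exp (-1 / z) * z / (1 - z)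

/-- Heterodyne scale integral S(u,v) = ∫_u^v Q(z) dz. -/
noncomputable def Shet (u v : ℝ) : ℝ := ∫ z in u..v, Qhet z

/-- Heterodyne R(u,v) = (1/γ)[log(z/(1−z)) − 2z]_u^v. -/
noncomputable def Rhet (γ u v : ℝ) : ℝ :=
  (1 / γ) * (Real.log (v / (1 - v)) - 2 * v - Real.log (u / (1 - u)) + 2 * u)

open Real MeasureTheory Filter Set intervalIntegral

/-- The regularized integrand: e·Q(z) − 1/(1−z). -/
noncomputable def phiH (z : ℝ) : ℝ := (Real.exp (1 - 1 / z) * z - 1) / (1 - z)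

lemma phiH_num_bound {z : ℝ} (h0 : 0 < z) (h1 : z < 1) :
    |Real.exp (1 - 1 / z) * z - 1| ≤ 2 * (1 - z) := by
  have hx : (0 : ℝ) ≤ 1 / z - 1 := by
    have : (1 : ℝ) ≤ 1 / z := one_le_one_div h0 h1.le
    linarith
  have hexp : 1 - Real.exp (1 - 1 / z) ≤ 1 / z - 1 := by
    have := Real.add_one_le_exp (1 - 1 / z)
    linarith
  have hexp' : Real.exp (1 - 1 / z) ≤ 1 := by
    have : (1 : ℝ) - 1 / z ≤ 0 := by linarith
    calc Real.exp (1 - 1 / z) ≤ Real.exp 0 := Real.exp_le_exp.mpr this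
      _ = 1 := Real.exp_zero
  have key : Real.exp (1 - 1 / z) * z - 1
      = z * (Real.exp (1 - 1 / z) - 1) + (z - 1) := by ring
  have h2 : |z * (Real.exp (1 - 1 / z) - 1)| ≤ 1 - z := by
    rw [abs_mul, abs_of_pos h0]
    have : |Real.exp (1 - 1 / z) - 1| ≤ 1 / z - 1 := by
      rw [abs_sub_comm, abs_of_nonneg (by linarith)]
      linarith
    calc z * |Real.exp (1 - 1 / z) - 1| ≤ z * (1 / z - 1) := by
          exact mul_le_mul_of_nonneg_left this h0.le
      _ = 1 - z := by field_simp
  calc |Real.exp (1 - 1 / z) * z - 1|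
      ≤ |z * (Real.exp (1 - 1 / z) - 1)| + |z - 1| := by rw [key]; exact abs_add_le _ _
    _ ≤ (1 - z) + (1 - z) := by
        refine add_le_add h2 ?_
        rw [abs_of_nonpos (by linarith)]; linarith
    _ = 2 * (1 - z) := by ring

lemma phiH_abs_bound {z : ℝ} (h0 : 0 < z) (h1 : z < 1) : |phiH z| ≤ 2 := by
  have hz : (0 : ℝ) < 1 - z := by linarith
  rw [phiH, abs_div, abs_of_pos hz, div_le_iff₀ hz]
  have := phiH_num_bound h0 h1
  linarith

lemma phiH_contOn : ContinuousOn phiH (Set.Ioo (0 : ℝ) 1) := by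
  apply ContinuousOn.div
  · exact ((Real.continuous_exp.comp_continuousOn
      (continuousOn_const.sub (continuousOn_const.div continuousOn_id
        fun z hz => ne_of_gt hz.1))).mul continuousOn_id).sub continuousOn_const
  · exact continuousOn_const.sub continuousOn_id
  · intro z hz
    have h2 : z < 1 := hz.2
    intro h
    first
      | linarith [sub_eq_zero.mp h]
      | (simp only [id_eq] at h; linarith [sub_eq_zero.mp h])

lemma one_sub_contOn : ContinuousOn (fun z : ℝ => 1 / (1 - z)) (Set.Ioo (0 : ℝ) 1) := by
  apply ContinuousOn.div continuousOn_const (continuousOn_const.sub continuousOn_id)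
  intro z hz
  have h2 : z < 1 := hz.2
  intro h
  first
    | linarith [sub_eq_zero.mp h]
    | (have h' : (1:ℝ) - z = 0 := h; linarith [sub_eq_zero.mp h'])

/-- Although R(a,y) and (e/γ)S(a,y) each diverge to +∞ as y → 1⁻, the mean
first hitting time T̄_a(y) = R(a,y) − S(a,y)·(e/γ) converges to a finite
limit: the mean time to decay from full excitation to level a is finite. -/
theorem het_mean_hitting_time_finite_at_one (γ a : ℝ) (hγ : 0 < γ)
    (ha0 : 0 < a) (ha1 : a < 1) :
    Filter.Tendsto (fun y => Rhet γ a y) (nhdsWithin 1 (Set.Iio 1))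
      Filter.atTop ∧
    Filter.Tendsto (fun y => (Real.exp 1 / γ) * Shet a y)
      (nhdsWithin 1 (Set.Iio 1)) Filter.atTop ∧
    ∃ L : ℝ, Filter.Tendsto (fun y => Rhet γ a y - Shet a y * (Real.exp 1 / γ))
      (nhdsWithin 1 (Set.Iio 1)) (nhds L) := by
  have hγ' : (0 : ℝ) < 1 / γ := by positivity
  -- the filter equals nhdsWithin over Ioo a 1
  have hIoo_mem : Set.Ioo a 1 ∈ nhdsWithin (1 : ℝ) (Set.Iio 1) := by
    rw [← nhdsWithin_Ioo_eq_nhdsLT ha1]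
    exact self_mem_nhdsWithin
  -- integrability of phiH on Icc a 1
  have hphi_int : MeasureTheory.IntegrableOn phiH (Set.Icc a 1) := by
    rw [integrableOn_Icc_iff_integrableOn_Ioo]
    have hmeas : MeasureTheory.AEStronglyMeasurable phiH
        (MeasureTheory.volume.restrict (Set.Ioo a 1)) :=
      (phiH_contOn.mono (Set.Ioo_subset_Ioo ha0.le le_rfl)).aestronglyMeasurable
        measurableSet_Ioo
    refine MeasureTheory.Integrable.mono'
      (g := fun _ => (2 : ℝ)) ?_ hmeas ?_
    · exact (MeasureTheory.integrableOn_const measure_Ioo_lt_top.ne)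
    · filter_upwards [MeasureTheory.ae_restrict_mem measurableSet_Ioo] with z hz
      exact phiH_abs_bound (lt_trans ha0 hz.1) hz.2
  -- continuity of the primitive of phiH, at 1 from within
  set Φ : ℝ → ℝ := fun y => ∫ z in a..y, phiH z with hΦdef
  have hΦcont : Filter.Tendsto Φ (nhdsWithin 1 (Set.Iio 1)) (nhds (Φ 1)) := by
    have h1 : ContinuousOn Φ (Set.uIcc a 1) := by
      apply intervalIntegral.continuousOn_primitive_interval
      rwa [Set.uIcc_of_le ha1.le]
    have h2 : Filter.Tendsto Φ (nhdsWithin 1 (Set.uIcc a 1)) (nhds (Φ 1)) :=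
      (h1 1 (Set.right_mem_uIcc)).tendsto
    refine h2.mono_left ?_
    rw [← nhdsWithin_Ioo_eq_nhdsLT ha1, Set.uIcc_of_le ha1.le]
    exact nhdsWithin_mono _ Set.Ioo_subset_Icc_self
  -- key identity for the S part
  have hSid : ∀ y ∈ Set.Ioo a 1,
      Real.exp 1 * Shet a y = Φ y + (Real.log (1 - a) - Real.log (1 - y)) := by
    intro y hy
    have hsub : Set.uIcc a y ⊆ Set.Ioo (0 : ℝ) 1 := by
      rw [Set.uIcc_of_le hy.1.le]
      exact fun z hz => ⟨lt_of_lt_of_le ha0 hz.1, lt_of_le_of_lt hz.2 hy.2⟩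
    have hint1 : IntervalIntegrable phiH MeasureTheory.volume a y :=
      (phiH_contOn.mono hsub).intervalIntegrable
    have hint2 : IntervalIntegrable (fun z => 1 / (1 - z)) MeasureTheory.volume a y :=
      (one_sub_contOn.mono hsub).intervalIntegrable
    have heq : Real.exp 1 * Shet a y = ∫ z in a..y, (phiH z + 1 / (1 - z)) := by
      rw [Shet, ← intervalIntegral.integral_const_mul]
      apply intervalIntegral.integral_congr
      intro z hz
      obtain ⟨hz0, hz1⟩ := hsub hz
      have h1z : (1 : ℝ) - z ≠ 0 := by intro h; linarith [sub_eq_zero.mp h]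
      have hz0' : z ≠ 0 := ne_of_gt hz0
      simp only [Qhet, phiH]
      rw [← add_div]
      have h1 : Real.exp (1 - 1 / z) * z - 1 + 1 = Real.exp (1 - 1 / z) * z := by ring
      rw [h1, show (1:ℝ) - 1 / z = 1 + -1 / z by ring, Real.exp_add]
      ring
    have hlog : (∫ z in a..y, 1 / (1 - z)) = Real.log (1 - a) - Real.log (1 - y) := by
      have hderiv : ∀ z ∈ Set.uIcc a y,
          HasDerivAt (fun t => -Real.log (1 - t)) (1 / (1 - z)) z := by
        intro z hz
        obtain ⟨hz0, hz1⟩ := hsub hz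
        have h1z : (1 : ℝ) - z ≠ 0 := by intro h; linarith [sub_eq_zero.mp h]
        have h : HasDerivAt (fun t : ℝ => 1 - t) (-1) z := by
          simpa using (hasDerivAt_id z).const_sub 1
        have := (h.log h1z).neg
        exact this.congr_deriv (by ring)
      rw [intervalIntegral.integral_eq_sub_of_hasDerivAt hderiv hint2]
      ring
    rw [heq, intervalIntegral.integral_add hint1 hint2, hlog]
  -- key identity for the R part
  have hRid : ∀ y ∈ Set.Ioo a 1, Rhet γ a y
      = (1 / γ) * (Real.log y - Real.log (1 - y) - 2 * y
          - Real.log (a / (1 - a)) + 2 * a) := by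
    intro y hy
    have hy0 : (0 : ℝ) < y := lt_trans ha0 hy.1
    have h1y : (0 : ℝ) < 1 - y := by linarith [hy.2]
    rw [Rhet, Real.log_div (ne_of_gt hy0) (ne_of_gt h1y)]
  -- tendsto of 1 - y into 𝓝[>] 0
  have hone_sub : Filter.Tendsto (fun y : ℝ => 1 - y) (nhdsWithin 1 (Set.Iio 1))
      (nhdsWithin 0 (Set.Ioi 0)) := by
    rw [tendsto_nhdsWithin_iff]
    constructor
    · have hc : Continuous (fun y : ℝ => 1 - y) := continuous_const.sub continuous_id
      have : Filter.Tendsto (fun y : ℝ => 1 - y) (nhds 1) (nhds 0) := by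
        simpa using hc.tendsto (1 : ℝ)
      exact this.mono_left nhdsWithin_le_nhds
    · filter_upwards [self_mem_nhdsWithin] with y hy
      simp only [Set.mem_Iio] at hy
      simp only [Set.mem_Ioi]
      linarith
  -- part 1 : R → atTop
  have hR_top : Filter.Tendsto (fun y => Rhet γ a y) (nhdsWithin 1 (Set.Iio 1))
      Filter.atTop := by
    have hfrac : Filter.Tendsto (fun y : ℝ => y / (1 - y)) (nhdsWithin 1 (Set.Iio 1))
        Filter.atTop := by
      have hinv : Filter.Tendsto (fun y : ℝ => (1 - y)⁻¹) (nhdsWithin 1 (Set.Iio 1))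
          Filter.atTop := tendsto_inv_nhdsGT_zero.comp hone_sub
      have hid : Filter.Tendsto (fun y : ℝ => y) (nhdsWithin 1 (Set.Iio 1)) (nhds 1) :=
        tendsto_id.mono_left nhdsWithin_le_nhds |>.mono_right (by rfl)
      have := Filter.Tendsto.pos_mul_atTop one_pos hid hinv
      simpa [div_eq_mul_inv] using this
    have hlog : Filter.Tendsto (fun y : ℝ => Real.log (y / (1 - y)))
        (nhdsWithin 1 (Set.Iio 1)) Filter.atTop := Real.tendsto_log_atTop.comp hfrac
    have hinner : Filter.Tendsto
        (fun y : ℝ => Real.log (y / (1 - y)) - 2 * y - Real.log (a / (1 - a)) + 2 * a)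
        (nhdsWithin 1 (Set.Iio 1)) Filter.atTop := by
      have hev : ∀ᶠ y in nhdsWithin (1:ℝ) (Set.Iio 1),
          -3 - Real.log (a / (1 - a)) + 2 * a
            ≤ -(2 * y) - Real.log (a / (1 - a)) + 2 * a := by
        filter_upwards [hIoo_mem] with y hy
        have : -(2 * y) ≥ -3 := by nlinarith [hy.2]
        linarith
      have := Filter.tendsto_atTop_add_right_of_le'
        (nhdsWithin (1:ℝ) (Set.Iio 1)) _ hlog hev
      refine this.congr fun y => by ring
    have := hinner.const_mul_atTop hγ'
    refine this.congr fun y => ?_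
    rw [Rhet]
  refine ⟨hR_top, ?_, ?_⟩
  -- part 2 : (e/γ) S → atTop
  · have hneg_log : Filter.Tendsto (fun y : ℝ => -Real.log (1 - y))
        (nhdsWithin 1 (Set.Iio 1)) Filter.atTop := by
      have : Filter.Tendsto (fun y : ℝ => Real.log (1 - y)) (nhdsWithin 1 (Set.Iio 1))
          Filter.atBot := Real.tendsto_log_nhdsGT_zero.comp hone_sub
      exact Filter.tendsto_neg_atTop_iff.mpr this
    have hΦbdd : Filter.Tendsto (fun y => Φ y + Real.log (1 - a))
        (nhdsWithin 1 (Set.Iio 1)) (nhds (Φ 1 + Real.log (1 - a))) :=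
      hΦcont.add tendsto_const_nhds
    have hinner : Filter.Tendsto (fun y => Φ y + (Real.log (1 - a) - Real.log (1 - y)))
        (nhdsWithin 1 (Set.Iio 1)) Filter.atTop := by
      have : Filter.Tendsto
          (fun y => -Real.log (1 - y) + (Φ y + Real.log (1 - a)))
          (nhdsWithin 1 (Set.Iio 1)) Filter.atTop := by
        apply Filter.tendsto_atTop_add_right_of_le' _ (Φ 1 + Real.log (1 - a) - 1)
          hneg_log
        filter_upwards [hΦbdd.eventually (eventually_ge_nhds
          (show Φ 1 + Real.log (1 - a) - 1 < Φ 1 + Real.log (1 - a) by linarith))]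
          with y hy
        exact hy
      refine this.congr fun y => by ring
    have := hinner.const_mul_atTop hγ'
    refine this.congr' ?_
    filter_upwards [hIoo_mem] with y hy
    rw [show (Real.exp 1 / γ) * Shet a y = (Real.exp 1 * Shet a y) * (1 / γ) by ring,
      hSid y hy]
    ring
  -- part 3 : finite limit
  · set C : ℝ := Real.log (a / (1 - a)) with hC
    refine ⟨(1 / γ) * (Real.log 1 - 2 * 1 - C + 2 * a - Φ 1 - Real.log (1 - a)), ?_⟩
    have hg : Filter.Tendsto
        (fun y => (1 / γ) * (Real.log y - 2 * y - C + 2 * a - Φ y - Real.log (1 - a)))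
        (nhdsWithin 1 (Set.Iio 1))
        (nhds ((1 / γ) * (Real.log 1 - 2 * 1 - C + 2 * a - Φ 1 - Real.log (1 - a)))) := by
      apply Filter.Tendsto.const_mul
      have hlog1 : Filter.Tendsto (fun y : ℝ => Real.log y) (nhdsWithin 1 (Set.Iio 1))
          (nhds (Real.log 1)) :=
        ((Real.continuousAt_log one_ne_zero).tendsto).comp
          (tendsto_id.mono_left nhdsWithin_le_nhds)
      have h2y : Filter.Tendsto (fun y : ℝ => 2 * y) (nhdsWithin 1 (Set.Iio 1))
          (nhds (2 * 1)) :=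
        (tendsto_id.mono_left nhdsWithin_le_nhds).const_mul 2
      exact ((((hlog1.sub h2y).sub tendsto_const_nhds).add tendsto_const_nhds).sub
        hΦcont).sub tendsto_const_nhds
    refine hg.congr' ?_
    filter_upwards [hIoo_mem] with y hy
    rw [hRid y hy,
      show Shet a y * (Real.exp 1 / γ) = (Real.exp 1 * Shet a y) * (1 / γ) by ring,
      hSid y hy]
    ring
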